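/- Let r ≥ 4 and let ℱ_r ⊆ ℝ^(𝒫([r])) be the set of all vectors V of the form V_T = (1_T(w) − 1_T(x)) · (1_T(y) − 1_T(z)) for four distinct elements w, x, y, z ∈ [r], where 1_T(v) = 1 if v ∈ T and 0 otherwise. Then ℱ_r contains a linearly independent subset of cardinality at least C(r, 2) − r. -/

import Mathlib

def nxt {r : ℕ} (k : Fin r) : Fin r := ⟨(k.val + 1) % r, Nat.mod_lt _ k.pos⟩

noncomputable def vecf {r : ℕ} (k l : Fin r) : Finset (Fin r) → ℝ :=
  fun T : Finset (Fin r) =>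
    ((if k ∈ T then (1 : ℝ) else 0) - (if nxt k ∈ T then (1 : ℝ) else 0))
      * ((if l ∈ T then (1 : ℝ) else 0) - (if nxt l ∈ T then (1 : ℝ) else 0))

def tset {r : ℕ} (k l : Fin r) : Finset (Fin r) :=
  Finset.univ.filter (fun v => k.val < v.val ∧ v.val ≤ l.val)

lemma eval_vecf {r : ℕ} (k l k' l' : Fin r) (h : k.val + 2 ≤ l.val)
    (h' : k'.val + 2 ≤ l'.val) :
    vecf k' l' (tset k l) = if k'.val = k.val ∧ l'.val = l.val then -1 else 0 := by
  have hk : k.val < r := k.isLt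
  have hl : l.val < r := l.isLt
  have hk' : k'.val < r := k'.isLt
  have hl' : l'.val < r := l'.isLt
  have hnk : (nxt k').val = k'.val + 1 := Nat.mod_eq_of_lt (by omega)
  rcases Nat.lt_or_ge (l'.val + 1) r with hw | hw
  · have hnl : (nxt l').val = l'.val + 1 := Nat.mod_eq_of_lt hw
    simp only [vecf, tset, Finset.mem_filter, Finset.mem_univ, true_and, hnk, hnl]
    split_ifs <;> first | (exfalso; omega) | norm_num
  · have hr1 : l'.val + 1 = r := by omega
    have hnl : (nxt l').val = 0 := by simp [nxt, hr1]
    simp only [vecf, tset, Finset.mem_filter, Finset.mem_univ, true_and, hnk, hnl]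
    split_ifs <;> first | (exfalso; omega) | norm_num

def pset (r : ℕ) : Finset (Fin r × Fin r) :=
  Finset.univ.filter (fun p => p.1.val + 2 ≤ p.2.val ∧ ¬(p.1.val = 0 ∧ p.2.val = r - 1))

lemma qcard (r : ℕ) :
    (Finset.univ.filter (fun p : Fin r × Fin r => p.1.val + 2 ≤ p.2.val)).card * 2
      = (r - 1) * (r - 2) := by
  rw [Finset.card_eq_sum_card_fiberwise (f := Prod.snd) (t := Finset.univ)
    (fun x _ => Finset.mem_univ _)]
  have step : ∀ l : Fin r,
      ((Finset.univ.filter (fun p : Fin r × Fin r => p.1.val + 2 ≤ p.2.val)).filter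
        (fun p => p.2 = l)).card = l.val - 1 := by
    intro l
    have hb : l.val - 1 < r := by have := l.isLt; omega
    have e1 : ((Finset.univ.filter (fun p : Fin r × Fin r => p.1.val + 2 ≤ p.2.val)).filter
        (fun p => p.2 = l)).card
        = (Finset.Iio (⟨l.val - 1, hb⟩ : Fin r)).card := by
      apply Finset.card_nbij' (fun p => p.1) (fun k => (k, l))
      · intro p hp
        simp only [Finset.mem_coe, Finset.mem_filter, Finset.mem_univ, true_and] at hp
        simp only [Finset.mem_coe, Finset.mem_Iio, Fin.lt_def, Fin.val_mk]
        obtain ⟨h1, h2⟩ := hp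
        subst h2
        omega
      · intro k hk
        simp only [Finset.mem_coe, Finset.mem_Iio, Fin.lt_def, Fin.val_mk] at hk
        simp only [Finset.mem_coe, Finset.mem_filter, Finset.mem_univ, true_and]
        exact ⟨by omega, trivial⟩
      · intro p hp
        simp only [Finset.mem_coe, Finset.mem_filter, Finset.mem_univ, true_and] at hp
        obtain ⟨a, b⟩ := p
        obtain ⟨h1, h2⟩ := hp
        cases h2
        rfl
      · intro k hk
        rfl
    rw [e1, Fin.card_Iio]
  rw [Finset.sum_congr rfl (fun l _ => step l)]
  rw [Fin.sum_univ_eq_sum_range (fun n => n - 1) r]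
  rcases Nat.eq_zero_or_pos r with hr | hr
  · subst hr; simp
  · obtain ⟨m, rfl⟩ : ∃ m, r = m + 1 := ⟨r - 1, by omega⟩
    rw [Finset.sum_range_succ']
    simp only [Nat.add_sub_cancel, Nat.zero_sub, add_zero]
    rw [Finset.sum_range_id_mul_two]
    simp

lemma pset_card_ge {r : ℕ} (hr : 4 ≤ r) : Nat.choose r 2 - r ≤ (pset r).card := by
  have h0 : (0 : ℕ) < r := by omega
  have h1 : r - 1 < r := by omega
  set Q : Finset (Fin r × Fin r) :=
    Finset.univ.filter (fun p : Fin r × Fin r => p.1.val + 2 ≤ p.2.val) with hQ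
  set spec : Fin r × Fin r := (⟨0, h0⟩, ⟨r - 1, h1⟩) with hspec
  have hPQ : pset r = Q.erase spec := by
    ext p
    simp only [pset, hQ, Finset.mem_erase, Finset.mem_filter, Finset.mem_univ, true_and,
      hspec, ne_eq, Prod.ext_iff, Fin.ext_iff]
    omega
  have hspecQ : spec ∈ Q := by
    simp only [hQ, Finset.mem_filter, Finset.mem_univ, true_and, hspec]
    omega
  have hcard : (pset r).card = Q.card - 1 := by
    rw [hPQ, Finset.card_erase_of_mem hspecQ]
  have hq := qcard r
  rw [← hQ] at hq
  have hch : Nat.choose r 2 * 2 = r * (r - 1) := by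
    rw [Nat.choose_two_right]
    rw [Nat.div_mul_cancel]
    exact (Nat.even_mul_pred_self r).two_dvd
  obtain ⟨m, rfl⟩ : ∃ m, r = m + 4 := ⟨r - 4, by omega⟩
  have e1 : (m + 4) * (m + 4 - 1) = m * m + 7 * m + 12 := by
    have : m + 4 - 1 = m + 3 := by omega
    rw [this]; ring
  have e2 : (m + 4 - 1) * (m + 4 - 2) = m * m + 5 * m + 6 := by
    have h3 : m + 4 - 1 = m + 3 := by omega
    have h4 : m + 4 - 2 = m + 2 := by omega
    rw [h3, h4]; ring
  rw [e1] at hch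
  rw [e2] at hq
  have hQpos : 1 ≤ Q.card := Finset.card_pos.mpr ⟨spec, hspecQ⟩
  omega

theorem familyF_linearIndependent_subset (r : ℕ) (hr : 4 ≤ r) :
    ∃ s : Finset (Finset (Fin r) → ℝ),
      (↑s : Set (Finset (Fin r) → ℝ)) ⊆
        {V | ∃ w x y z : Fin r,
          w ≠ x ∧ w ≠ y ∧ w ≠ z ∧ x ≠ y ∧ x ≠ z ∧ y ≠ z ∧
          V = fun T : Finset (Fin r) =>
            ((if w ∈ T then (1 : ℝ) else 0) - (if x ∈ T then (1 : ℝ) else 0))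
              * ((if y ∈ T then (1 : ℝ) else 0) - (if z ∈ T then (1 : ℝ) else 0))} ∧
      LinearIndependent ℝ (fun v : s => (v : Finset (Fin r) → ℝ)) ∧
      r.choose 2 - r ≤ s.card := by
  classical
  refine ⟨(pset r).image (fun p => vecf p.1 p.2), ?_, ?_, ?_⟩
  · -- subset
    intro v hv
    simp only [Finset.coe_image, Set.mem_image, Finset.mem_coe] at hv
    obtain ⟨p, hp, rfl⟩ := hv
    have hpm : p.1.val + 2 ≤ p.2.val ∧ ¬(p.1.val = 0 ∧ p.2.val = r - 1) := by
      simpa [pset] using hp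
    obtain ⟨h1, h2⟩ := hpm
    have hk : p.1.val < r := p.1.isLt
    have hl : p.2.val < r := p.2.isLt
    have hnk : (nxt p.1).val = p.1.val + 1 := Nat.mod_eq_of_lt (by omega)
    have hnl : (nxt p.2).val = (p.2.val + 1) % r := rfl
    have hz : (nxt p.2).val = p.2.val + 1 ∨ ((nxt p.2).val = 0 ∧ p.2.val = r - 1) := by
      rcases Nat.lt_or_ge (p.2.val + 1) r with hw | hw
      · exact Or.inl (Nat.mod_eq_of_lt hw)
      · refine Or.inr ⟨?_, by omega⟩
        rw [hnl]
        have hv : p.2.val + 1 = r := by omega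
        rw [hv, Nat.mod_self]
    refine ⟨p.1, nxt p.1, p.2, nxt p.2, ?_, ?_, ?_, ?_, ?_, ?_, rfl⟩ <;>
      (intro hcon; rw [Fin.ext_iff] at hcon; rcases hz with hzz | hzz <;> omega)
  · -- linear independence
    rw [Fintype.linearIndependent_iff]
    intro g hg i
    have hi2 := i.2
    simp only [Finset.mem_image] at hi2
    obtain ⟨p, hp, hpv⟩ := hi2
    have hpm : p.1.val + 2 ≤ p.2.val := by
      have := Finset.mem_filter.mp hp
      exact this.2.1
    have := congrFun hg (tset p.1 p.2)
    rw [Finset.sum_apply] at this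
    simp only [Pi.smul_apply, smul_eq_mul, Pi.zero_apply] at this
    rw [Finset.sum_eq_single i] at this
    · rw [← hpv, eval_vecf p.1 p.2 p.1 p.2 hpm hpm] at this
      simp only [and_self, if_true] at this
      have : g i * (-1) = 0 := by simpa using this
      linarith [this]
    · intro b _ hbne
      have hb2 := b.2
      simp only [Finset.mem_image] at hb2
      obtain ⟨q, hq, hqv⟩ := hb2
      have hqm : q.1.val + 2 ≤ q.2.val := by
        have := Finset.mem_filter.mp hq
        exact this.2.1
      have hev : (b : Finset (Fin r) → ℝ) (tset p.1 p.2) = 0 := by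
        rw [← hqv, eval_vecf p.1 p.2 q.1 q.2 hpm hqm]
        rw [if_neg]
        intro hcon
        apply hbne
        apply Subtype.ext
        rw [← hqv, ← hpv]
        have : q = p := by
          apply Prod.ext <;> apply Fin.ext
          · exact hcon.1
          · exact hcon.2
        rw [this]
      rw [hev, mul_zero]
    · intro hcon
      exact absurd (Finset.mem_univ i) hcon
  · -- cardinality
    have hinj : Set.InjOn (fun p : Fin r × Fin r => vecf p.1 p.2) (pset r) := by
      intro p hp q hq hpq
      have hpm : p.1.val + 2 ≤ p.2.val := by
        have := Finset.mem_filter.mp hp; exact this.2.1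
      have hqm : q.1.val + 2 ≤ q.2.val := by
        have := Finset.mem_filter.mp hq; exact this.2.1
      have hpq' : vecf p.1 p.2 = vecf q.1 q.2 := hpq
      have := congrFun hpq' (tset p.1 p.2)
      rw [eval_vecf p.1 p.2 p.1 p.2 hpm hpm, eval_vecf p.1 p.2 q.1 q.2 hpm hqm] at this
      simp only [and_self, if_true] at this
      by_cases hd : q.1.val = p.1.val ∧ q.2.val = p.2.val
      · apply Prod.ext <;> apply Fin.ext
        · exact hd.1.symm
        · exact hd.2.symm
      · rw [if_neg hd] at this
        norm_num at this
    rw [Finset.card_image_of_injOn hinj]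
    exact pset_card_ge hr
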